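/- Let G(t,τ) = (πt)^{-1/2} e^{-τ²/(4t)}. For any bounded measurable η : (0,∞) → ℝ, if ∫₀^∞ η(τ) G(t,τ) dτ = 0 for all t > 0, then η = 0 almost everywhere on (0,∞). -/

import Mathlib

open MeasureTheory Set
open scoped ContDiff

/-- The Reznitskaya transform kernel `G(t,τ) = (πt)^{-1/2} e^{-τ²/(4t)}`. -/
noncomputable def G (t τ : ℝ) : ℝ :=
  (Real.sqrt (Real.pi * t))⁻¹ * Real.exp (-(τ^2) / (4 * t))

lemma exp_neg_sq_mem_Icc (τ : ℝ) : Real.exp (-τ^2) ∈ Set.Icc (0:ℝ) 1 :=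
  ⟨(Real.exp_pos _).le, Real.exp_le_one_iff.mpr (neg_nonpos.mpr (sq_nonneg τ))⟩

/-- Injectivity of the Reznitskaya transform: if `η` is bounded measurable and
`∫₀^∞ η(τ) G(t,τ) dτ = 0` for all `t > 0`, then `η = 0` a.e. on `(0,∞)`. -/
theorem reznitskaya_injective
    (η : ℝ → ℝ) (hmeas : Measurable η)
    (hbd : ∃ M : ℝ, ∀ τ : ℝ, |η τ| ≤ M)
    (h0 : ∀ t : ℝ, 0 < t → ∫ τ in Set.Ioi (0:ℝ), η τ * G t τ = 0) :
    ∀ᵐ τ ∂(MeasureTheory.volume.restrict (Set.Ioi (0:ℝ))), η τ = 0 := by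
  obtain ⟨M, hM⟩ := hbd
  set μ : Measure ℝ := volume.restrict (Set.Ioi (0:ℝ)) with hμ
  set f : ℝ → ℝ := fun τ => η τ * Real.exp (-τ^2) with hfdef
  have hfm : Measurable f := hmeas.mul (by fun_prop)
  have hfint : Integrable f μ := by
    have h1 : Integrable (fun τ : ℝ => M * Real.exp (-(1:ℝ) * τ^2)) μ :=
      ((integrable_exp_neg_mul_sq one_pos).const_mul M).restrict
    refine h1.mono' hfm.aestronglyMeasurable ?_
    filter_upwards with τ
    simp only [Real.norm_eq_abs, abs_mul, Real.abs_exp, neg_one_mul, hfdef]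
    exact mul_le_mul_of_nonneg_right (hM τ) (Real.exp_pos _).le
  -- Step A : Laplace-type vanishing
  have hA : ∀ s : ℝ, 0 < s → ∫ τ, η τ * Real.exp (-(s * τ^2)) ∂μ = 0 := by
    intro s hs
    have ht : (0:ℝ) < 1 / (4 * s) := by positivity
    have h := h0 (1 / (4 * s)) ht
    have hpit : (0:ℝ) < Real.pi * (1 / (4 * s)) := by
      have := Real.pi_pos; positivity
    have hc : (0:ℝ) < (Real.sqrt (Real.pi * (1 / (4 * s))))⁻¹ := by
      rw [inv_pos]; exact Real.sqrt_pos.mpr hpit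
    set c := (Real.sqrt (Real.pi * (1 / (4 * s))))⁻¹ with hcdef
    have hrw : ∀ τ : ℝ, η τ * G (1 / (4 * s)) τ = c * (η τ * Real.exp (-(s * τ^2))) := by
      intro τ
      have harg : -(τ^2) / (4 * (1 / (4 * s))) = -(s * τ^2) := by
        field_simp
      simp only [G, harg, hcdef]
      ring
    rw [show (fun τ => η τ * G (1 / (4 * s)) τ) = fun τ => c * (η τ * Real.exp (-(s * τ^2)))
      from funext hrw] at h
    rw [integral_const_mul] at h
    exact (mul_eq_zero.mp h).resolve_left (ne_of_gt hc)
  -- moments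
  have hmom : ∀ n : ℕ, ∫ τ, f τ * (Real.exp (-τ^2))^n ∂μ = 0 := by
    intro n
    have heq : (fun τ => f τ * (Real.exp (-τ^2))^n)
        = fun τ => η τ * Real.exp (-(((n:ℝ)+1) * τ^2)) := by
      funext τ
      simp only [hfdef]
      rw [mul_assoc, ← Real.exp_nat_mul, ← Real.exp_add]
      congr 2
      ring
    rw [heq]
    exact hA _ (by positivity)
  -- integrability against bounded continuous compositions
  have hintc : ∀ Gc : ℝ → ℝ, ContinuousOn Gc (Set.Icc 0 1) →
      Integrable (fun τ => f τ * Gc (Real.exp (-τ^2))) μ := by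
    intro Gc hGc
    have hcomp : Continuous (fun τ : ℝ => Gc (Real.exp (-τ^2))) :=
      hGc.comp_continuous (by fun_prop) exp_neg_sq_mem_Icc
    obtain ⟨C, hC⟩ := (isCompact_Icc (a := (0:ℝ)) (b := 1)).exists_bound_of_continuousOn hGc
    have h1 : Integrable (fun τ => Gc (Real.exp (-τ^2)) * f τ) μ :=
      hfint.bdd_mul (c := C) hcomp.aestronglyMeasurable
        (Filter.Eventually.of_forall fun τ => hC _ (exp_neg_sq_mem_Icc τ))
    have h2 : (fun τ => f τ * Gc (Real.exp (-τ^2)))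
        = fun τ => Gc (Real.exp (-τ^2)) * f τ := funext fun τ => mul_comm _ _
    rw [h2]; exact h1
  -- polynomials
  have hpoly : ∀ p : Polynomial ℝ, ∫ τ, f τ * p.eval (Real.exp (-τ^2)) ∂μ = 0 := by
    intro p
    induction p using Polynomial.induction_on' with
    | add p q hp hq =>
      have h1 := hintc (fun x => p.eval x) p.continuousOn
      have h2 := hintc (fun x => q.eval x) q.continuousOn
      simp only [Polynomial.eval_add, mul_add]
      rw [integral_add h1 h2, hp, hq, add_zero]
    | monomial n a =>
      simp only [Polynomial.eval_monomial]
      have heq : (fun τ => f τ * (a * (Real.exp (-τ^2))^n))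
          = fun τ => a * (f τ * (Real.exp (-τ^2))^n) := funext fun τ => by ring
      rw [heq, integral_const_mul, hmom n, mul_zero]
  -- continuous functions
  have hcont : ∀ Gc : ℝ → ℝ, ContinuousOn Gc (Set.Icc 0 1) →
      ∫ τ, f τ * Gc (Real.exp (-τ^2)) ∂μ = 0 := by
    intro Gc hGc
    set C₀ : ℝ := ∫ τ, |f τ| ∂μ with hC₀def
    have hC₀ : 0 ≤ C₀ := integral_nonneg fun τ => abs_nonneg _
    set I : ℝ := ∫ τ, f τ * Gc (Real.exp (-τ^2)) ∂μ with hIdef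
    have key : ∀ ε : ℝ, 0 < ε → |I| ≤ C₀ * ε := by
      intro ε hε
      obtain ⟨p, hp⟩ := exists_polynomial_near_of_continuousOn 0 1 Gc hGc ε hε
      have hint1 := hintc Gc hGc
      have hint2 := hintc (fun x => p.eval x) p.continuousOn
      have hI2 : I = ∫ τ, (f τ * Gc (Real.exp (-τ^2)) - f τ * p.eval (Real.exp (-τ^2))) ∂μ := by
        rw [integral_sub hint1 hint2, hpoly p, sub_zero, hIdef]
      rw [hI2, ← Real.norm_eq_abs]
      have hb : Integrable (fun τ => |f τ| * ε) μ := hfint.abs.mul_const ε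
      have hbound : ∀ᵐ τ ∂μ, ‖f τ * Gc (Real.exp (-τ^2)) - f τ * p.eval (Real.exp (-τ^2))‖
          ≤ |f τ| * ε := by
        filter_upwards with τ
        rw [← mul_sub, Real.norm_eq_abs, abs_mul]
        refine mul_le_mul_of_nonneg_left ?_ (abs_nonneg _)
        rw [abs_sub_comm]
        exact (hp _ (exp_neg_sq_mem_Icc τ)).le
      calc ‖∫ τ, (f τ * Gc (Real.exp (-τ^2)) - f τ * p.eval (Real.exp (-τ^2))) ∂μ‖
          ≤ ∫ τ, |f τ| * ε ∂μ := norm_integral_le_of_norm_le hb hbound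
        _ = C₀ * ε := by rw [integral_mul_const, hC₀def]
    have habs : |I| ≤ 0 := by
      refine le_of_forall_pos_le_add fun δ hδ => ?_
      have h1 := key (δ / (C₀ + 1)) (by positivity)
      have h2 : C₀ * (δ / (C₀ + 1)) ≤ δ := by
        rw [mul_div_assoc']
        rw [div_le_iff₀ (by positivity)]
        nlinarith
      linarith
    have : |I| = 0 := le_antisymm habs (abs_nonneg _)
    exact abs_eq_zero.mp this
  -- test functions
  set F : ℝ → ℝ := Set.indicator (Set.Ioi 0) f with hFdef
  have hFint : Integrable F volume := by
    rw [hFdef, integrable_indicator_iff measurableSet_Ioi]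
    exact hfint
  have hsm : ∀ g : ℝ → ℝ, ContDiff ℝ ∞ g → HasCompactSupport g →
      ∫ x, g x • F x = 0 := by
    intro g hg hgsupp
    obtain ⟨R₀, hR₀⟩ := (Metric.isBounded_iff_subset_closedBall 0).mp hgsupp.isBounded
    set R : ℝ := max R₀ 0 with hRdef
    have hR : 0 ≤ R := le_max_right _ _
    have hgz : ∀ τ : ℝ, R < |τ| → g τ = 0 := by
      intro τ hτ
      apply image_eq_zero_of_notMem_tsupport
      intro hmem
      have := hR₀ hmem
      rw [Metric.mem_closedBall, Real.dist_eq, sub_zero] at this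
      exact absurd (this.trans (le_max_left _ 0)) (not_le.mpr hτ)
    set Gg : ℝ → ℝ := fun x => if x ≤ 0 then 0 else g (Real.sqrt (-Real.log x)) with hGgdef
    have hGgcont : ContinuousOn Gg (Set.Icc 0 1) := by
      intro x hx
      rcases eq_or_lt_of_le hx.1 with hx0 | hx0
      · -- x = 0
        have hev : Gg =ᶠ[nhdsWithin x (Set.Icc 0 1)] fun _ => 0 := by
          have hmem : Set.Iio (Real.exp (-(R^2+1))) ∈ nhdsWithin x (Set.Icc 0 1) := by
            apply nhdsWithin_le_nhds
            apply Iio_mem_nhds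
            rw [← hx0]
            exact Real.exp_pos _
          filter_upwards [hmem] with y hy
          by_cases hy0 : y ≤ 0
          · simp [hGgdef, hy0]
          · push_neg at hy0
            have hlog : Real.log y < -(R^2+1) := by
              have h1 : Real.log y < Real.log (Real.exp (-(R^2+1))) :=
                Real.log_lt_log hy0 hy
              rwa [Real.log_exp] at h1
            have hsq : R < Real.sqrt (-Real.log y) := by
              have h2 : R^2 < -Real.log y := by nlinarith
              calc R = Real.sqrt (R^2) := (Real.sqrt_sq hR).symm
                _ < Real.sqrt (-Real.log y) := Real.sqrt_lt_sqrt (sq_nonneg R) h2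
            have : g (Real.sqrt (-Real.log y)) = 0 :=
              hgz _ (by rwa [abs_of_nonneg (Real.sqrt_nonneg _)])
            simp [hGgdef, not_le.mpr hy0, this]
        have hval : Gg x = 0 := by simp [hGgdef, ← hx0]
        exact (continuousWithinAt_const (b := (0:ℝ))).congr_of_eventuallyEq hev hval
      · -- 0 < x
        have h1 : ContinuousAt (fun y : ℝ => g (Real.sqrt (-Real.log y))) x :=
          hg.continuous.continuousAt.comp (Real.continuous_sqrt.continuousAt.comp
            (Real.continuousAt_log (ne_of_gt hx0)).neg)
        have hev : Gg =ᶠ[nhds x] fun y => g (Real.sqrt (-Real.log y)) := by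
          filter_upwards [isOpen_Ioi.mem_nhds hx0] with y hy
          simp [hGgdef, not_le.mpr (Set.mem_Ioi.mp hy)]
        exact (h1.congr hev.symm).continuousWithinAt
    have hkey : ∀ τ ∈ Set.Ioi (0:ℝ), g τ • f τ = f τ * Gg (Real.exp (-τ^2)) := by
      intro τ hτ
      have h1 : ¬ Real.exp (-τ^2) ≤ 0 := not_le.mpr (Real.exp_pos _)
      simp only [hGgdef, h1, if_false, Real.log_exp, neg_neg, Real.sqrt_sq (le_of_lt hτ),
        smul_eq_mul]
      ring
    have hind : ∀ x : ℝ, g x • F x = Set.indicator (Set.Ioi 0) (fun τ => g τ • f τ) x := by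
      intro x
      by_cases hx : x ∈ Set.Ioi (0:ℝ) <;> simp [hFdef, hx]
    calc ∫ x, g x • F x = ∫ x, Set.indicator (Set.Ioi 0) (fun τ => g τ • f τ) x :=
          integral_congr_ae (Filter.Eventually.of_forall hind)
      _ = ∫ τ in Set.Ioi (0:ℝ), g τ • f τ := integral_indicator measurableSet_Ioi
      _ = ∫ τ, f τ * Gg (Real.exp (-τ^2)) ∂μ := setIntegral_congr_fun measurableSet_Ioi hkey
      _ = 0 := hcont Gg hGgcont
  have hae : ∀ᵐ x ∂(volume : Measure ℝ), F x = 0 :=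
    ae_eq_zero_of_integral_contDiff_smul_eq_zero hFint.locallyIntegrable hsm
  have hae' : ∀ᵐ x ∂μ, F x = 0 := ae_restrict_of_ae hae
  filter_upwards [hae', ae_restrict_mem measurableSet_Ioi] with τ h1 h2
  rw [hFdef, Set.indicator_of_mem h2, hfdef] at h1
  simpa [Real.exp_ne_zero] using h1
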